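/- Let b : ℝ → ℝ be continuous, non-negative, T-periodic with ∫₀ᵀ b(t)dt > 0, and let ω > 0. If f : ℝ → ℝ is a twice continuously differentiable solution of f''(t) + 2b(t)f'(t) + ω²f(t) = 0 which is P-periodic for some P > 0, then f ≡ 0. (Energy argument: E(t) = ½|f'(t)|² + ½ω²|f(t)|² satisfies E'(t) = −2b(t)|f'(t)|², so periodicity forces ∫ b|f'|² = 0 over each period, which by uniqueness of solutions forces f ≡ 0.) -/

import Mathlib

noncomputable section
open MeasureTheory

/-- Energy argument: a periodic, twice continuously differentiable real solution of
`f'' + 2b(t)f' + ω²f = 0` with `b` continuous, non-negative, `T`-periodic,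
`∫₀ᵀ b > 0` and `ω > 0` must vanish identically. -/
theorem periodic_solution_damped_oscillator_trivial
    (T : ℝ) (hT : 0 < T)
    (b : ℝ → ℝ) (hb_cont : Continuous b) (hb_nonneg : ∀ t, 0 ≤ b t)
    (hb_per : Function.Periodic b T) (hb_int : 0 < ∫ t in (0:ℝ)..T, b t)
    (ω : ℝ) (hω : 0 < ω)
    (f : ℝ → ℝ) (hf : ContDiff ℝ 2 f)
    (hode : ∀ t, deriv (deriv f) t + 2 * b t * deriv f t + ω ^ 2 * f t = 0)
    (P : ℝ) (hP : 0 < P) (hfP : Function.Periodic f P) :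
    ∀ t, f t = 0 := by
  -- basic differentiability facts
  have hf2 : ContDiff ℝ ((1 : ℕ) + 1) f := by exact_mod_cast hf
  have hdf : Differentiable ℝ f := (contDiff_succ_iff_deriv.mp hf2).1
  have hdf' : Differentiable ℝ (deriv f) :=
    (contDiff_succ_iff_deriv.mp hf2).2.2.differentiable (by simp)
  have hd1 : ∀ t, HasDerivAt f (deriv f t) t := fun t => (hdf t).hasDerivAt
  have hd2 : ∀ t, HasDerivAt (deriv f) (deriv (deriv f) t) t := fun t => (hdf' t).hasDerivAt
  -- energy
  set E : ℝ → ℝ := fun t => deriv f t * deriv f t / 2 + ω ^ 2 * (f t * f t / 2) with hEdef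
  have hE : ∀ t, HasDerivAt E (-(2 * b t * (deriv f t) ^ 2)) t := by
    intro t
    have h := (((hd2 t).mul (hd2 t)).div_const 2).add
      ((((hd1 t).mul (hd1 t)).div_const 2).const_mul (ω ^ 2))
    refine h.congr_deriv (Eq.symm ?_)
    linear_combination (-(deriv f t)) * hode t
  have hEdiff : Differentiable ℝ E := fun t => (hE t).differentiableAt
  have hanti : Antitone E := by
    apply antitone_of_deriv_nonpos hEdiff
    intro t
    rw [(hE t).deriv]
    nlinarith [hb_nonneg t, sq_nonneg (deriv f t)]
  -- E is P-periodic
  have hderivP : Function.Periodic (deriv f) P := by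
    intro t
    have : deriv (fun x => f (x + P)) t = deriv f (t + P) := deriv_comp_add_const ..
    rw [← this]
    congr 1
    exact hfP.funext
  have hEP : Function.Periodic E P := fun t => by
    simp only [hEdef, hfP t, hderivP t]
  -- antitone + periodic ⇒ constant
  have key : ∀ s u : ℝ, s ≤ u → E s = E u := by
    intro s u hsu
    obtain ⟨n, hn⟩ := exists_nat_ge ((u - s) / P)
    have h1 : u ≤ s + n * P := by
      have := (div_le_iff₀ hP).mp hn
      linarith
    have h2 : E (s + n * P) = E s := (hEP.nat_mul n) s
    exact le_antisymm (by rw [← h2]; exact hanti h1) (hanti hsu)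
  have hEconst : ∀ s u : ℝ, E s = E u := by
    intro s u
    rcases le_total s u with h | h
    · exact key s u h
    · exact (key u s h).symm
  -- derivative of E is zero, so b * (f')² = 0 everywhere
  have hbf' : ∀ t, b t * (deriv f t) ^ 2 = 0 := by
    intro t
    have hEfun : E = fun _ => E 0 := funext fun s => hEconst s 0
    have h0 : HasDerivAt E 0 t := by rw [hEfun]; exact hasDerivAt_const _ _
    have := (hE t).unique h0
    linarith
  -- a point where b is positive
  have hbpos : ∃ t₀, 0 < b t₀ := by
    by_contra h
    push_neg at h
    have hbz : b = fun _ => (0 : ℝ) := funext fun t => le_antisymm (h t) (hb_nonneg t)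
    rw [hbz] at hb_int
    simp at hb_int
  obtain ⟨t₀, ht₀⟩ := hbpos
  -- deriv f vanishes on a neighborhood of t₀
  have hU : IsOpen {t : ℝ | 0 < b t} := isOpen_lt continuous_const hb_cont
  have hev : ∀ᶠ t in nhds t₀, deriv f t = 0 := by
    filter_upwards [hU.mem_nhds ht₀] with t ht
    have h := hbf' t
    have hb' : b t ≠ 0 := ne_of_gt ht
    have : (deriv f t) ^ 2 = 0 := by
      rcases mul_eq_zero.mp h with h | h
      · exact absurd h hb'
      · exact h
    exact pow_eq_zero_iff (n := 2) (by norm_num) |>.mp this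
  have hf't₀ : deriv f t₀ = 0 := hev.self_of_nhds
  have hf''t₀ : deriv (deriv f) t₀ = 0 := by
    have : deriv (deriv f) t₀ = deriv (fun _ => (0 : ℝ)) t₀ :=
      Filter.EventuallyEq.deriv_eq hev
    simpa using this
  -- hence f t₀ = 0, so E t₀ = 0
  have hft₀ : f t₀ = 0 := by
    have h := hode t₀
    rw [hf't₀, hf''t₀] at h
    have hω2 : ω ^ 2 ≠ 0 := ne_of_gt (pow_pos hω 2)
    have : ω ^ 2 * f t₀ = 0 := by linarith
    exact (mul_eq_zero.mp this).resolve_left hω2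
  have hEt₀ : E t₀ = 0 := by
    simp [hEdef, hf't₀, hft₀]
  -- conclude
  intro t
  have hEt : E t = 0 := (hEconst t t₀).trans hEt₀
  have h1 : f t * f t ≤ 0 := by
    have h2 : deriv f t * deriv f t / 2 + ω ^ 2 * (f t * f t / 2) = 0 := hEt
    nlinarith [mul_self_nonneg (deriv f t), pow_pos hω 2]
  exact mul_self_eq_zero.mp (le_antisymm h1 (mul_self_nonneg (f t)))
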